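/- The function f = (1/√2) φ_0 + φ_2 is nonzero, satisfies f(0) = 0, and its Fourier transform f̂ = (1/√2) φ_0 − φ_2 satisfies f̂(1) = 0 and f̂(−1) = 0. Hence (Λ, M) with Λ = {0}, M = {−1, 1} is not a uniqueness pair for span{φ_0, φ_1, φ_2}. -/

import Mathlib

open MeasureTheory

/-- Unitary Fourier transform. -/
noncomputable def fourierT (f : ℝ → ℂ) (ω : ℝ) : ℂ :=
  ((Real.sqrt (2 * Real.pi) : ℝ) : ℂ)⁻¹ *
    ∫ t : ℝ, f t * Complex.exp (-Complex.I * ω * t)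

/-- `φ_0(x) = π^{-1/4} e^{-x²/2}`. -/
noncomputable def phi0 (x : ℝ) : ℝ :=
  Real.pi ^ (-(1 : ℝ)/4) * Real.exp (-x ^ 2 / 2)

/-- `φ_1(x) = π^{-1/4} √2 x e^{-x²/2}`. -/
noncomputable def phi1 (x : ℝ) : ℝ :=
  Real.pi ^ (-(1 : ℝ)/4) * Real.sqrt 2 * x * Real.exp (-x ^ 2 / 2)

/-- `φ_2(x) = π^{-1/4} 2^{-1/2} (2x² − 1) e^{-x²/2}`. -/
noncomputable def phi2 (x : ℝ) : ℝ :=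
  Real.pi ^ (-(1 : ℝ)/4) * (Real.sqrt 2)⁻¹ * (2 * x ^ 2 - 1) * Real.exp (-x ^ 2 / 2)

section Aux

open Real Complex FourierTransform
open scoped Real

lemma intg_pow (n : ℕ) : Integrable (fun x : ℝ => (x:ℂ)^n * Complex.exp (-(1/2:ℂ) * (x:ℂ)^2)) := by
  have hb : (0:ℝ) < 1/2 := by norm_num
  have h := (integrable_rpow_mul_exp_neg_mul_sq hb
    (s := (n:ℝ)) (lt_of_lt_of_le (by norm_num) (Nat.cast_nonneg n))).norm
  refine h.mono' ?_ (Filter.Eventually.of_forall fun x => ?_)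
  · exact ((continuous_ofReal.pow n).mul
      (Complex.continuous_exp.comp (continuous_const.mul (continuous_ofReal.pow 2)))).aestronglyMeasurable
  · have hre : (-(1/2:ℂ) * (x:ℂ)^2) = ((-(1/2) * x^2 : ℝ) : ℂ) := by push_cast; ring
    rw [norm_mul, norm_pow, hre, Complex.norm_exp,
      Complex.ofReal_re, Real.norm_eq_abs, abs_mul, Real.rpow_natCast, _root_.abs_pow,
      abs_of_pos (Real.exp_pos _)]
    simp [Complex.norm_real]

lemma fourier_g :
    (𝓕 fun x : ℝ => Complex.exp (-(1/2:ℂ) * (x:ℂ)^2))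
      = fun w : ℝ => (Real.sqrt (2*π) : ℂ) * Complex.exp (((-2*π^2:ℝ) : ℂ) * (w:ℂ)^2) := by
  have hπ : (0:ℝ) < 2*π := by positivity
  have hb : (0:ℝ) < (2*π)⁻¹ := by positivity
  have h := fourier_gaussian_pi (b := (((2*π)⁻¹ : ℝ) : ℂ)) (by simpa using hb)
  have h1 : (fun x : ℝ => Complex.exp (-(π:ℂ) * (((2*π)⁻¹ : ℝ) : ℂ) * (x:ℂ)^2))
      = fun x : ℝ => Complex.exp (-(1/2:ℂ) * (x:ℂ)^2) := by
    funext x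
    congr 1
    have : ((π:ℝ):ℂ) ≠ 0 := Complex.ofReal_ne_zero.mpr Real.pi_ne_zero
    push_cast
    field_simp
  rw [h1] at h
  rw [h]
  funext w
  have hcpow : ((((2*π)⁻¹ : ℝ)) : ℂ) ^ (1/2 : ℂ) = ((Real.sqrt (2*π))⁻¹ : ℝ) := by
    rw [show (1/2 : ℂ) = ((1/2 : ℝ) : ℂ) by norm_num, ← Complex.ofReal_cpow hb.le]
    norm_cast
    rw [Real.inv_rpow hπ.le, ← Real.sqrt_eq_rpow]
  rw [hcpow]
  congr 1
  · push_cast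
    simp
  · congr 1
    have hpi : ((π:ℝ):ℂ) ≠ 0 := Complex.ofReal_ne_zero.mpr Real.pi_ne_zero
    push_cast
    field_simp

lemma fourier_moment2 (w : ℝ) :
    (-4*(π:ℂ)^2) * 𝓕 (fun x : ℝ => (x:ℂ)^2 * Complex.exp (-(1/2:ℂ) * (x:ℂ)^2)) w
      = (-4*(π:ℂ)^2) * ((Real.sqrt (2*π) : ℂ) * (1 - 4*(π:ℂ)^2*(w:ℂ)^2) *
          Complex.exp (((-2*π^2:ℝ) : ℂ) * (w:ℂ)^2)) := by
  set c : ℂ := ((-2*π^2 : ℝ) : ℂ) with hc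
  have hg : Integrable (fun x : ℝ => Complex.exp (-(1/2:ℂ) * (x:ℂ)^2)) := by
    simpa using intg_pow 0
  have hg1 : Integrable (fun x : ℝ => x • Complex.exp (-(1/2:ℂ) * (x:ℂ)^2)) := by
    have h := intg_pow 1
    simpa [Complex.real_smul] using h
  have hE : ∀ z : ℂ, HasDerivAt (fun z : ℂ => Complex.exp (c * z^2))
      (Complex.exp (c * z^2) * (c * (2*z))) z := by
    intro z
    have hp : HasDerivAt (fun z : ℂ => c * z^2) (c * (2*z)) z := by
      simpa using (hasDerivAt_pow 2 z).const_mul c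
    exact hp.cexp
  have hC : ∀ w : ℝ, HasDerivAt (fun w : ℝ => (Real.sqrt (2*π) : ℂ) * Complex.exp (c * (w:ℂ)^2))
      ((Real.sqrt (2*π) : ℂ) * (Complex.exp (c * (w:ℂ)^2) * (c * (2*(w:ℂ))))) w := by
    intro w
    exact ((hE (w:ℂ)).comp_ofReal).const_mul _
  have hd1 : ∀ w : ℝ, HasDerivAt (fun w : ℝ => (Real.sqrt (2*π) : ℂ) * Complex.exp (c * (w:ℂ)^2))
      (𝓕 (fun x : ℝ => (-2 * ↑π * Complex.I * ↑x) • Complex.exp (-(1/2:ℂ) * (x:ℂ)^2)) w) w := by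
    intro w
    have h := Real.hasDerivAt_fourier hg hg1 w
    rwa [fourier_g] at h
  have hFg1 : (𝓕 fun x : ℝ => (-2 * ↑π * Complex.I * ↑x) • Complex.exp (-(1/2:ℂ) * (x:ℂ)^2))
      = fun w : ℝ => ((Real.sqrt (2*π) : ℂ) * (2*c)) *
          ((w:ℂ) * Complex.exp (c * (w:ℂ)^2)) := by
    funext w
    have h := (hd1 w).unique (hC w)
    rw [h]; ring
  have hgA : Integrable (fun x : ℝ => (-2 * ↑π * Complex.I * ↑x) •
      Complex.exp (-(1/2:ℂ) * (x:ℂ)^2)) := by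
    have h := (intg_pow 1).const_mul (-2 * ↑π * Complex.I)
    have he : (fun x : ℝ => (-2 * ↑π * Complex.I * ↑x) • Complex.exp (-(1/2:ℂ) * (x:ℂ)^2))
        = fun x : ℝ => (-2 * ↑π * Complex.I) * ((x:ℂ)^1 * Complex.exp (-(1/2:ℂ) * (x:ℂ)^2)) := by
      funext x; simp [smul_eq_mul]; ring
    rw [he]; exact h
  have hgB : Integrable (fun x : ℝ => x • ((-2 * ↑π * Complex.I * ↑x) •
      Complex.exp (-(1/2:ℂ) * (x:ℂ)^2))) := by
    have h := (intg_pow 2).const_mul (-2 * ↑π * Complex.I)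
    have he : (fun x : ℝ => x • ((-2 * ↑π * Complex.I * ↑x) •
        Complex.exp (-(1/2:ℂ) * (x:ℂ)^2)))
        = fun x : ℝ => (-2 * ↑π * Complex.I) * ((x:ℂ)^2 * Complex.exp (-(1/2:ℂ) * (x:ℂ)^2)) := by
      funext x; simp [smul_eq_mul, Complex.real_smul]; ring
    rw [he]; exact h
  have hQ : ∀ w : ℝ, HasDerivAt (fun w : ℝ => ((Real.sqrt (2*π) : ℂ) * (2*c)) *
      ((w:ℂ) * Complex.exp (c * (w:ℂ)^2)))
      (((Real.sqrt (2*π) : ℂ) * (2*c)) *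
        (Complex.exp (c * (w:ℂ)^2) + (w:ℂ) * (Complex.exp (c * (w:ℂ)^2) * (c * (2*(w:ℂ)))))) w := by
    intro w
    have h1 : HasDerivAt (fun z : ℂ => z * Complex.exp (c * z^2))
        (1 * Complex.exp (c * (w:ℂ)^2) + (w:ℂ) * (Complex.exp (c * (w:ℂ)^2) * (c * (2*(w:ℂ)))))
        (w:ℂ) := (hasDerivAt_id _).mul (hE (w:ℂ))
    have h2 := (h1.comp_ofReal).const_mul ((Real.sqrt (2*π) : ℂ) * (2*c))
    simpa [one_mul] using h2
  have hd2 : ∀ w : ℝ, HasDerivAt (fun w : ℝ => ((Real.sqrt (2*π) : ℂ) * (2*c)) *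
      ((w:ℂ) * Complex.exp (c * (w:ℂ)^2)))
      (𝓕 (fun x : ℝ => (-2 * ↑π * Complex.I * ↑x) • ((-2 * ↑π * Complex.I * ↑x) •
        Complex.exp (-(1/2:ℂ) * (x:ℂ)^2))) w) w := by
    intro w
    have h := Real.hasDerivAt_fourier hgA hgB w
    rwa [hFg1] at h
  have hval := (hd2 w).unique (hQ w)
  have hlin : 𝓕 (fun x : ℝ => (-2 * ↑π * Complex.I * ↑x) • ((-2 * ↑π * Complex.I * ↑x) •
        Complex.exp (-(1/2:ℂ) * (x:ℂ)^2))) w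
      = (-4*(π:ℂ)^2) * 𝓕 (fun x : ℝ => (x:ℂ)^2 * Complex.exp (-(1/2:ℂ) * (x:ℂ)^2)) w := by
    rw [Real.fourier_real_eq_integral_exp_smul,
      Real.fourier_real_eq_integral_exp_smul, ← MeasureTheory.integral_const_mul]
    congr 1
    funext v
    simp only [smul_eq_mul]
    have hI : Complex.I^2 = -1 := Complex.I_sq
    ring_nf
    rw [hI]
    ring
  rw [← hlin, hval]
  have h2c : 2*c = ((-4*π^2:ℝ) : ℂ) := by rw [hc]; push_cast; ring
  rw [h2c, hc]
  push_cast
  ring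

lemma key (ω : ℝ) : ∫ x : ℝ, ((x:ℂ)^2 * Complex.exp (-(1/2:ℂ) * (x:ℂ)^2)) *
      Complex.exp (-Complex.I * ω * x)
    = (Real.sqrt (2*π) : ℂ) * (1 - (ω:ℂ)^2) * Complex.exp (-(1/2:ℂ) * (ω:ℂ)^2) := by
  have hπ : (π:ℝ) ≠ 0 := Real.pi_ne_zero
  have hπC : ((π:ℝ):ℂ) ≠ 0 := Complex.ofReal_ne_zero.mpr hπ
  have h := fourier_moment2 (ω/(2*π))
  have h4 : (-4*(π:ℂ)^2) ≠ 0 := by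
    simp only [ne_eq, neg_mul, neg_eq_zero, mul_eq_zero]
    push_neg
    constructor
    · norm_num
    · exact pow_ne_zero 2 hπC
  have h' := mul_left_cancel₀ h4 h
  rw [Real.fourier_real_eq_integral_exp_smul] at h'
  have hint : (∫ v : ℝ, Complex.exp (↑(-2 * π * v * (ω/(2*π))) * Complex.I) •
        ((v:ℂ)^2 * Complex.exp (-(1/2:ℂ) * (v:ℂ)^2)))
      = ∫ x : ℝ, ((x:ℂ)^2 * Complex.exp (-(1/2:ℂ) * (x:ℂ)^2)) *
        Complex.exp (-Complex.I * ω * x) := by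
    congr 1
    funext v
    rw [smul_eq_mul, mul_comm]
    congr 2
    push_cast
    field_simp
  rw [hint] at h'
  rw [h']
  have e1 : (1 - 4*(π:ℂ)^2*((ω/(2*π) : ℝ):ℂ)^2) = 1 - (ω:ℂ)^2 := by
    push_cast
    field_simp
    ring
  have e2 : (((-2*π^2:ℝ)):ℂ) * ((ω/(2*π) : ℝ):ℂ)^2 = -(1/2:ℂ) * (ω:ℂ)^2 := by
    push_cast
    field_simp
  rw [e1, e2]

lemma sqrt2_inv_eq : (Real.sqrt 2)⁻¹ = Real.sqrt 2 / 2 := by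
  have h2 : Real.sqrt 2 * Real.sqrt 2 = 2 := Real.mul_self_sqrt (by norm_num)
  have h2' : Real.sqrt 2 ≠ 0 := by positivity
  rw [eq_div_iff (by norm_num : (2:ℝ) ≠ 0), inv_mul_eq_div, div_eq_iff h2']
  linarith [h2]

lemma f_eq_real (t : ℝ) : (Real.sqrt 2)⁻¹ * phi0 t + phi2 t
    = Real.sqrt 2 * Real.pi ^ (-(1:ℝ)/4) * (t^2 * Real.exp (-t^2/2)) := by
  unfold phi0 phi2
  rw [sqrt2_inv_eq]
  ring

lemma ghat_eq_real (t : ℝ) : (Real.sqrt 2)⁻¹ * phi0 t - phi2 t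
    = Real.sqrt 2 * Real.pi ^ (-(1:ℝ)/4) * ((1 - t^2) * Real.exp (-t^2/2)) := by
  unfold phi0 phi2
  rw [sqrt2_inv_eq]
  ring

lemma exp_cast (t : ℝ) : ((Real.exp (-t^2/2) : ℝ) : ℂ) = Complex.exp (-(1/2:ℂ) * (t:ℂ)^2) := by
  rw [Complex.ofReal_exp]
  congr 1
  push_cast
  ring

lemma f_eqC (t : ℝ) : ((Real.sqrt 2)⁻¹ * phi0 t + phi2 t : ℂ)
    = ((Real.sqrt 2 * Real.pi ^ (-(1:ℝ)/4) : ℝ) : ℂ) *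
        ((t:ℂ)^2 * Complex.exp (-(1/2:ℂ) * (t:ℂ)^2)) := by
  have h := f_eq_real t
  calc ((Real.sqrt 2)⁻¹ * phi0 t + phi2 t : ℂ)
      = (((Real.sqrt 2)⁻¹ * phi0 t + phi2 t : ℝ) : ℂ) := by push_cast; ring
    _ = ((Real.sqrt 2 * Real.pi ^ (-(1:ℝ)/4) * (t^2 * Real.exp (-t^2/2)) : ℝ) : ℂ) := by rw [h]
    _ = _ := by
        rw [Complex.ofReal_mul, Complex.ofReal_mul, Complex.ofReal_mul, exp_cast]
        push_cast; ring

lemma ghat_eqC (t : ℝ) : ((Real.sqrt 2)⁻¹ * phi0 t - phi2 t : ℂ)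
    = ((Real.sqrt 2 * Real.pi ^ (-(1:ℝ)/4) : ℝ) : ℂ) *
        ((1 - (t:ℂ)^2) * Complex.exp (-(1/2:ℂ) * (t:ℂ)^2)) := by
  have h := ghat_eq_real t
  calc ((Real.sqrt 2)⁻¹ * phi0 t - phi2 t : ℂ)
      = (((Real.sqrt 2)⁻¹ * phi0 t - phi2 t : ℝ) : ℂ) := by push_cast; ring
    _ = ((Real.sqrt 2 * Real.pi ^ (-(1:ℝ)/4) * ((1-t^2) * Real.exp (-t^2/2)) : ℝ) : ℂ) := by
        rw [h]
    _ = _ := by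
        rw [Complex.ofReal_mul, Complex.ofReal_mul, Complex.ofReal_mul, exp_cast]
        push_cast; ring

lemma fourierT_eq (ω : ℝ) :
    fourierT (fun t => ((Real.sqrt 2)⁻¹ * phi0 t + phi2 t : ℂ)) ω
      = ((Real.sqrt 2)⁻¹ * phi0 ω - phi2 ω : ℂ) := by
  unfold fourierT
  simp_rw [f_eqC, mul_assoc]
  rw [MeasureTheory.integral_const_mul]
  simp_rw [← mul_assoc]
  rw [key ω, ghat_eqC ω]
  have hs : ((Real.sqrt (2*π) : ℝ) : ℂ) ≠ 0 := by
    apply Complex.ofReal_ne_zero.mpr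
    positivity
  rw [inv_mul_eq_div, div_mul_eq_mul_div, div_eq_iff hs]
  ring

end Aux

/-- `f = (1/√2) φ_0 + φ_2` is nonzero, `f(0) = 0`, its Fourier transform is
`f̂ = (1/√2) φ_0 − φ_2` which vanishes at `±1`; hence `(Λ, M) = ({0}, {−1, 1})`
is not a uniqueness pair for `span{φ_0, φ_1, φ_2}`. -/
theorem stmt_4 :
    (fun t : ℝ => ((Real.sqrt 2)⁻¹ * phi0 t + phi2 t : ℂ)) ≠ 0 ∧
    ((Real.sqrt 2)⁻¹ * phi0 0 + phi2 0 : ℂ) = 0 ∧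
    (∀ ω : ℝ, fourierT (fun t => ((Real.sqrt 2)⁻¹ * phi0 t + phi2 t : ℂ)) ω
        = ((Real.sqrt 2)⁻¹ * phi0 ω - phi2 ω : ℂ)) ∧
    ((Real.sqrt 2)⁻¹ * phi0 1 - phi2 1 : ℂ) = 0 ∧
    ((Real.sqrt 2)⁻¹ * phi0 (-1) - phi2 (-1) : ℂ) = 0 ∧
    ¬ (∀ g : ℝ → ℂ,
        g ∈ Submodule.span ℂ
          ({fun t => (phi0 t : ℂ), fun t => (phi1 t : ℂ), fun t => (phi2 t : ℂ)} :
            Set (ℝ → ℂ)) →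
        (∀ t ∈ ({0} : Set ℝ), g t = 0) →
        (∀ ω ∈ ({-1, 1} : Set ℝ), fourierT g ω = 0) → g = 0) := by
  have hne : (fun t : ℝ => ((Real.sqrt 2)⁻¹ * phi0 t + phi2 t : ℂ)) ≠ 0 := by
    intro h
    have h1 := congrFun h 1
    simp only [Pi.zero_apply] at h1
    have h1' : ((Real.sqrt 2)⁻¹ * phi0 1 + phi2 1 : ℝ) = 0 := by exact_mod_cast h1
    have hpos : (0:ℝ) < (Real.sqrt 2)⁻¹ * phi0 1 + phi2 1 := by
      unfold phi0 phi2
      positivity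
    linarith
  have hzero : ((Real.sqrt 2)⁻¹ * phi0 0 + phi2 0 : ℂ) = 0 := by
    have : ((Real.sqrt 2)⁻¹ * phi0 0 + phi2 0 : ℝ) = 0 := by
      rw [f_eq_real]
      norm_num
    exact_mod_cast this
  have hone : ((Real.sqrt 2)⁻¹ * phi0 1 - phi2 1 : ℂ) = 0 := by
    have : ((Real.sqrt 2)⁻¹ * phi0 1 - phi2 1 : ℝ) = 0 := by
      rw [ghat_eq_real]
      norm_num
    exact_mod_cast this
  have hmone : ((Real.sqrt 2)⁻¹ * phi0 (-1) - phi2 (-1) : ℂ) = 0 := by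
    have : ((Real.sqrt 2)⁻¹ * phi0 (-1) - phi2 (-1) : ℝ) = 0 := by
      rw [ghat_eq_real]
      norm_num
    exact_mod_cast this
  refine ⟨hne, hzero, fourierT_eq, hone, hmone, ?_⟩
  intro h
  apply hne
  apply h
  · have hmem : (fun t : ℝ => ((Real.sqrt 2)⁻¹ * phi0 t + phi2 t : ℂ))
        = (((Real.sqrt 2)⁻¹ : ℝ) : ℂ) • (fun t : ℝ => (phi0 t : ℂ))
          + (fun t : ℝ => (phi2 t : ℂ)) := by
      funext t
      simp only [Pi.add_apply, Pi.smul_apply, smul_eq_mul]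
    rw [hmem]
    refine Submodule.add_mem _ (Submodule.smul_mem _ _ (Submodule.subset_span ?_))
      (Submodule.subset_span ?_)
    · simp
    · simp
  · intro t ht
    simp only [Set.mem_singleton_iff] at ht
    subst ht
    exact hzero
  · intro ω hω
    rw [fourierT_eq ω]
    rcases hω with h1 | h1
    · rw [h1]; exact hmone
    · simp only [Set.mem_singleton_iff] at h1
      rw [h1]; exact hone
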